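/- As formal power series, the coefficient of q^{6n+4} in the product ∏_{m>0, m ≡ ±2, ±6, ±8, ±10 mod 24} (1 − q^m) vanishes for every n ≥ 0. -/

import Mathlib

open Finset PowerSeries

noncomputable section
namespace CVaux

/-- Coefficients of the finite Jacobi-triple-product expansion (q-binomial
coefficients in disguise), defined by the Pascal-type recurrence coming from
multiplying the product `∏ (z + X^(8j+4))(1 + z X^(8j+4))` by one more factor. -/
def c : ℕ → ℤ → PowerSeries ℤ
  | 0, k => if k = 0 then 1 else 0
  | (n+1), k => X^(8*n+4) * (c n (k-1) + c n (k+1)) + (1 + X^(16*n+8)) * c n k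

lemma c_zero (k : ℤ) : c 0 k = if k = 0 then 1 else 0 := rfl

lemma c_succ (n : ℕ) (k : ℤ) :
    c (n+1) k = X^(8*n+4) * (c n (k-1) + c n (k+1)) + (1 + X^(16*n+8)) * c n k := rfl

lemma c_eq_zero : ∀ (n : ℕ) (k : ℤ), n < k.natAbs → c n k = 0
  | 0, k, hk => by
    have : k ≠ 0 := by omega
    simp [c_zero, this]
  | (n+1), k, hk => by
    rw [c_succ, c_eq_zero n (k-1) (by omega), c_eq_zero n (k+1) (by omega),
      c_eq_zero n k (by omega)]
    ring

lemma c_neg : ∀ (n : ℕ) (k : ℤ), c n (-k) = c n k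
  | 0, k => by
    simp [c_zero, neg_eq_zero]
  | (n+1), k => by
    rw [c_succ, c_succ, show -k - 1 = -(k+1) by ring, show -k + 1 = -(k-1) by ring,
      c_neg n (k+1), c_neg n (k-1), c_neg n k]
    ring


/-- The specialization `z = -X^2` of the Jacobi-triple-product polynomial. -/
def S (n : ℕ) : PowerSeries ℤ :=
  ∑ d ∈ Finset.range (2*n+1), (-1)^d * X^(2*d) * c n ((d : ℤ) - (n : ℤ))

def P1 (n : ℕ) : PowerSeries ℤ :=
  ∏ j ∈ Finset.range n, ((1 - X^(8*j+2)) * (1 - X^(8*j+6)))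

def Pev (n : ℕ) : PowerSeries ℤ := ∏ j ∈ Finset.Ioc 0 n, (1 - X^(8*j))

def g (n k : ℕ) : PowerSeries ℤ :=
  (∏ j ∈ Finset.Ioc (n-k) n, (1 - X^(8*j))) * ∏ j ∈ Finset.Ioc (n+k) (2*n), (1 - X^(8*j))

lemma S_def (n : ℕ) :
    S n = ∑ d ∈ Finset.range (2*n+1), (-1)^d * X^(2*d) * c n ((d : ℤ) - (n : ℤ)) := rfl

lemma S_succ (n : ℕ) :
    S (n+1) = S n * ((X^(8*n+4) - X^2) * (1 - X^(8*n+6))) := by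
  have hA : ∀ d ∈ Finset.range ((2*n+1)+1+1),
      ((-1 : PowerSeries ℤ))^d * X^(2*d) * c (n+1) ((d : ℤ) - ((n+1 : ℕ) : ℤ))
      = (-1)^d * X^(2*d) * (X^(8*n+4) * c n ((d:ℤ) - n - 2))
        + ((-1)^d * X^(2*d) * (X^(8*n+4) * c n ((d:ℤ) - n))
        + (-1)^d * X^(2*d) * ((1 + X^(16*n+8)) * c n ((d:ℤ) - n - 1))) := by
    intro d _
    have e0 : ((d : ℤ) - ((n+1 : ℕ) : ℤ)) = (d:ℤ) - n - 1 := by push_cast; ring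
    rw [e0, c_succ, show (d:ℤ) - (n:ℤ) - 1 - 1 = (d:ℤ) - n - 2 by ring,
      show (d:ℤ) - (n:ℤ) - 1 + 1 = (d:ℤ) - n by ring]
    ring
  have hSa : ∑ d ∈ Finset.range ((2*n+1)+1+1),
      ((-1 : PowerSeries ℤ))^d * X^(2*d) * (X^(8*n+4) * c n ((d:ℤ) - n - 2))
      = X^(8*n+8) * S n := by
    rw [Finset.sum_range_succ', Finset.sum_range_succ']
    rw [show c n (((0:ℕ):ℤ) - n - 2) = 0 from c_eq_zero n _ (by omega)]
    rw [show c n (((0+1:ℕ):ℤ) - (n:ℤ) - 2) = 0 from c_eq_zero n _ (by push_cast; omega)]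
    rw [S_def n, Finset.mul_sum]
    simp only [mul_zero, zero_mul, add_zero]
    refine Finset.sum_congr rfl fun d _ => ?_
    rw [show (((d+1+1 : ℕ)):ℤ) - n - 2 = (d:ℤ) - n by push_cast; ring]
    ring
  have hSb : ∑ d ∈ Finset.range ((2*n+1)+1+1),
      ((-1 : PowerSeries ℤ))^d * X^(2*d) * (X^(8*n+4) * c n ((d:ℤ) - n))
      = X^(8*n+4) * S n := by
    rw [Finset.sum_range_succ, Finset.sum_range_succ]
    rw [show c n ((((2*n+1)+1:ℕ):ℤ) - n) = 0 from c_eq_zero n _ (by push_cast; omega)]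
    rw [show c n ((((2*n+1):ℕ):ℤ) - n) = 0 from c_eq_zero n _ (by push_cast; omega)]
    rw [S_def n, Finset.mul_sum]
    simp only [mul_zero, zero_mul, add_zero]
    refine Finset.sum_congr rfl fun d _ => ?_
    ring
  have hSc : ∑ d ∈ Finset.range ((2*n+1)+1+1),
      ((-1 : PowerSeries ℤ))^d * X^(2*d) * ((1 + X^(16*n+8)) * c n ((d:ℤ) - n - 1))
      = (-(X^2) - X^(16*n+10)) * S n := by
    rw [Finset.sum_range_succ, Finset.sum_range_succ']
    rw [show c n ((((2*n+1)+1:ℕ):ℤ) - n - 1) = 0 from c_eq_zero n _ (by push_cast; omega)]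
    rw [show c n (((0:ℕ):ℤ) - n - 1) = 0 from c_eq_zero n _ (by omega)]
    rw [S_def n, Finset.mul_sum]
    simp only [mul_zero, zero_mul, add_zero]
    refine Finset.sum_congr rfl fun d _ => ?_
    rw [show (((d+1 : ℕ)):ℤ) - n - 1 = (d:ℤ) - n by push_cast; ring]
    ring
  have hmain : S (n+1) = X^(8*n+8) * S n + (X^(8*n+4) * S n + (-(X^2) - X^(16*n+10)) * S n) := by
    rw [← hSa, ← hSb, ← hSc, ← Finset.sum_add_distrib, ← Finset.sum_add_distrib]
    rw [S_def (n+1), show (2*(n+1)+1) = (2*n+1)+1+1 from by ring]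
    exact Finset.sum_congr rfl hA
  rw [hmain]
  ring

lemma prod_Ioc_bot (f : ℕ → PowerSeries ℤ) {a b : ℕ} (h : a < b) :
    ∏ j ∈ Finset.Ioc a b, f j = f (a+1) * ∏ j ∈ Finset.Ioc (a+1) b, f j := by
  rw [← Finset.prod_Ioc_consecutive f (Nat.le_succ a) h]
  congr 1
  rw [Nat.Ioc_succ_singleton, Finset.prod_singleton]

lemma gPev : ∀ n : ℕ, ∀ k : ℕ, k ≤ n → c n (k : ℤ) * Pev n = X^(4*k^2) * g n k := by
  intro n
  induction n with
  | zero =>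
    intro k hk
    interval_cases k
    simp [c_zero, Pev, g]
  | succ n ih =>
    intro k hk
    have hPev : Pev (n+1) = Pev n * (1 - X^(8*(n+1))) := Finset.prod_Ioc_succ_top (Nat.zero_le n) (fun j => 1 - X^(8*j))
    rcases Nat.eq_or_lt_of_le hk with hk1 | hk1
    · -- k = n+1
      subst hk1
      rw [c_succ, show ((n+1:ℕ):ℤ) - 1 = ((n:ℕ):ℤ) by push_cast; ring,
        show c n (((n+1:ℕ):ℤ)+1) = 0 from c_eq_zero n _ (by push_cast; omega),
        show c n ((n+1:ℕ):ℤ) = 0 from c_eq_zero n _ (by push_cast; omega)]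
      have hgn1 : g (n+1) (n+1) = Pev (n+1) := by
        unfold g Pev
        rw [Nat.sub_self, show n+1+(n+1) = 2*(n+1) from by ring, Finset.Ioc_self,
          Finset.prod_empty, mul_one]
      have hgn : g n n = Pev n := by
        unfold g Pev
        rw [Nat.sub_self, show n+n = 2*n from by ring, Finset.Ioc_self,
          Finset.prod_empty, mul_one]
      have hcn := ih n le_rfl
      rw [hgn] at hcn
      rw [hPev, hgn1, hPev]
      linear_combination (X^(8*n+4) * (1 - X^(8*(n+1)))) * hcn
    · have hk' : k ≤ n := by omega
      rcases Nat.eq_zero_or_pos k with rfl | hkpos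
      · rcases Nat.eq_zero_or_pos n with rfl | hnpos
        · -- n = 0, k = 0
          show c 1 ((0:ℕ):ℤ) * Pev 1 = X^(4*0^2) * g 1 0
          rw [show ((0:ℕ):ℤ) = (0:ℤ) from by norm_num, c_succ,
            show (0:ℤ)-1 = -1 from by ring, show (0:ℤ)+1 = 1 from by ring]
          simp only [c_zero]
          norm_num [Pev, g, Nat.Ioc_succ_singleton]
          ring
        · -- k = 0, n ≥ 1
          have ih0 := ih 0 (Nat.zero_le n)
          have ih1 := ih 1 hnpos
          simp only [Nat.cast_zero, Nat.cast_one] at ih0 ih1 ⊢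
          have hg0 : g n 0 = (1 - X^(8*(n+1))) * ∏ j ∈ Finset.Ioc (n+1) (2*n), (1-X^(8*j)) := by
            unfold g
            rw [Nat.sub_zero, Nat.add_zero, Finset.Ioc_self, Finset.prod_empty, one_mul,
              prod_Ioc_bot _ (by omega : n < 2*n)]
          have hg1 : g n 1 = (1 - X^(8*n)) * ∏ j ∈ Finset.Ioc (n+1) (2*n), (1-X^(8*j)) := by
            unfold g
            rw [prod_Ioc_bot _ (by omega : n - 1 < n), show n-1+1 = n from by omega,
              Finset.Ioc_self, Finset.prod_empty, mul_one]
          have hgS : g (n+1) 0 = (∏ j ∈ Finset.Ioc (n+1) (2*n), (1-X^(8*j)))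
              * ((1 - X^(8*(2*n+1))) * (1 - X^(8*(2*n+2)))) := by
            unfold g
            rw [Nat.sub_zero, Nat.add_zero, Finset.Ioc_self, Finset.prod_empty, one_mul,
              show 2*(n+1) = (2*n+1)+1 from by ring,
              Finset.prod_Ioc_succ_top (by omega : n+1 ≤ 2*n+1),
              show 2*n+1 = (2*n)+1 from rfl,
              Finset.prod_Ioc_succ_top (by omega : n+1 ≤ 2*n)]
            ring
          rw [c_succ, show (0:ℤ)-1 = -1 from by ring, show (0:ℤ)+1 = 1 from by ring,
            c_neg n 1, hPev, hgS]
          rw [hg0] at ih0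
          rw [hg1] at ih1
          linear_combination ((1 - X^(8*(n+1))) * X^(8*n+4) * 2) * ih1
            + ((1 - X^(8*(n+1))) * (1 + X^(16*n+8))) * ih0
      · rcases Nat.eq_or_lt_of_le hk' with hkn | hklt
        · -- k = n ≥ 1
          subst hkn
          obtain ⟨m, rfl⟩ : ∃ m, k = m+1 := ⟨k-1, by omega⟩
          have ihm := ih m (by omega)
          have ihn := ih (m+1) le_rfl
          have hPevE : Pev (m+1) = (1 - X^(8*1)) * ∏ j ∈ Finset.Ioc 1 (m+1), (1-X^(8*j)) := by
            unfold Pev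
            rw [prod_Ioc_bot _ (by omega : 0 < m+1)]
          have hgn : g (m+1) (m+1) = Pev (m+1) := by
            unfold g Pev
            rw [Nat.sub_self, show m+1+(m+1) = 2*(m+1) from by ring, Finset.Ioc_self,
              Finset.prod_empty, mul_one]
          have hgm : g (m+1) m = (∏ j ∈ Finset.Ioc 1 (m+1), (1-X^(8*j)))
              * (1 - X^(8*(2*m+2))) := by
            unfold g
            rw [show m+1-m = 1 from by omega, show m+1+m = 2*m+1 from by omega,
              show 2*(m+1) = (2*m+1)+1 from by ring,
              Finset.prod_Ioc_succ_top (by omega : 2*m+1 ≤ 2*m+1),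
              Finset.Ioc_self, Finset.prod_empty, one_mul]
          have hgS : g (m+1+1) (m+1) = ((∏ j ∈ Finset.Ioc 1 (m+1), (1-X^(8*j)))
              * (1 - X^(8*(m+2)))) * (1 - X^(8*(2*m+4))) := by
            unfold g
            rw [show m+1+1-(m+1) = 1 from by omega, show m+1+1+(m+1) = 2*m+3 from by omega,
              show 2*(m+1+1) = (2*m+3)+1 from by ring,
              show m+1+1 = (m+1)+1 from rfl,
              Finset.prod_Ioc_succ_top (by omega : 1 ≤ m+1),
              Finset.prod_Ioc_succ_top (by omega : 2*m+3 ≤ 2*m+3),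
              Finset.Ioc_self, Finset.prod_empty, one_mul]
          rw [c_succ, show ((m+1:ℕ):ℤ) - 1 = ((m:ℕ):ℤ) by push_cast; ring,
            show c (m+1) (((m+1:ℕ):ℤ)+1) = 0 from c_eq_zero _ _ (by push_cast; omega),
            hPev, hgS]
          rw [hgm, hPevE] at ihm
          rw [hgn, hPevE] at ihn
          rw [hPevE]
          linear_combination ((1 - X^(8*(m+1+1))) * X^(8*(m+1)+4)) * ihm
            + ((1 - X^(8*(m+1+1))) * (1 + X^(16*(m+1)+8))) * ihn
        · -- 1 ≤ k < n : interior case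
          obtain ⟨k', rfl⟩ : ∃ k', k = k'+1 := ⟨k-1, by omega⟩
          obtain ⟨t, rfl⟩ : ∃ t, n = t+(k'+2) := ⟨n-(k'+2), by omega⟩
          have ihk' := ih k' (by omega)
          have ihk := ih (k'+1) (by omega)
          have ihk2 := ih (k'+2) (by omega)
          have hgk : g (t+(k'+2)) (k'+1) = ((1-X^(8*(t+2))) * ∏ j ∈ Finset.Ioc (t+2) (t+(k'+2)), (1-X^(8*j)))
              * ((1-X^(8*(t+2*k'+4))) * ∏ j ∈ Finset.Ioc (t+2*k'+4) (2*(t+(k'+2))), (1-X^(8*j))) := by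
            unfold g
            rw [show t+(k'+2) - (k'+1) = t+1 from by omega,
              show t+(k'+2)+(k'+1) = t+2*k'+3 from by omega,
              prod_Ioc_bot _ (by omega : t+1 < t+(k'+2)), show t+1+1 = t+2 from by omega,
              prod_Ioc_bot _ (by omega : t+2*k'+3 < 2*(t+(k'+2))),
              show t+2*k'+3+1 = t+2*k'+4 from by omega]
          have hgk' : g (t+(k'+2)) k' = (∏ j ∈ Finset.Ioc (t+2) (t+(k'+2)), (1-X^(8*j)))
              * ((1-X^(8*(t+2*k'+3))) * ((1-X^(8*(t+2*k'+4))) * ∏ j ∈ Finset.Ioc (t+2*k'+4) (2*(t+(k'+2))), (1-X^(8*j)))) := by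
            unfold g
            rw [show t+(k'+2) - k' = t+2 from by omega,
              show t+(k'+2)+k' = t+2*k'+2 from by omega,
              prod_Ioc_bot _ (by omega : t+2*k'+2 < 2*(t+(k'+2))),
              show t+2*k'+2+1 = t+2*k'+3 from by omega,
              prod_Ioc_bot _ (by omega : t+2*k'+3 < 2*(t+(k'+2))),
              show t+2*k'+3+1 = t+2*k'+4 from by omega]
          have hgk2 : g (t+(k'+2)) (k'+2) = ((1-X^(8*(t+1))) * ((1-X^(8*(t+2))) * ∏ j ∈ Finset.Ioc (t+2) (t+(k'+2)), (1-X^(8*j))))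
              * ∏ j ∈ Finset.Ioc (t+2*k'+4) (2*(t+(k'+2))), (1-X^(8*j)) := by
            unfold g
            rw [show t+(k'+2) - (k'+2) = t from by omega,
              show t+(k'+2)+(k'+2) = t+2*k'+4 from by omega,
              prod_Ioc_bot _ (by omega : t < t+(k'+2)),
              prod_Ioc_bot _ (by omega : t+1 < t+(k'+2)), show t+1+1 = t+2 from by omega]
          have hgS : g (t+(k'+2)+1) (k'+1) = ((∏ j ∈ Finset.Ioc (t+2) (t+(k'+2)), (1-X^(8*j))) * (1-X^(8*(t+(k'+2)+1))))
              * (((∏ j ∈ Finset.Ioc (t+2*k'+4) (2*(t+(k'+2))), (1-X^(8*j))) * (1-X^(8*(2*(t+(k'+2))+1)))) * (1-X^(8*(2*(t+(k'+2))+2)))) := by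
            unfold g
            rw [show t+(k'+2)+1 - (k'+1) = t+2 from by omega,
              show t+(k'+2)+1+(k'+1) = t+2*k'+4 from by omega,
              show 2*(t+(k'+2)+1) = (2*(t+(k'+2))+1)+1 from by ring,
              show t+(k'+2)+1 = (t+(k'+2))+1 from rfl,
              Finset.prod_Ioc_succ_top (by omega : t+2 ≤ t+(k'+2)),
              Finset.prod_Ioc_succ_top (by omega : t+2*k'+4 ≤ 2*(t+(k'+2))+1),
              show 2*(t+(k'+2))+1 = (2*(t+(k'+2)))+1 from rfl,
              Finset.prod_Ioc_succ_top (by omega : t+2*k'+4 ≤ 2*(t+(k'+2)))]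
          rw [c_succ, show ((k'+1:ℕ):ℤ) - 1 = ((k':ℕ):ℤ) by push_cast; ring,
            show ((k'+1:ℕ):ℤ) + 1 = ((k'+2:ℕ):ℤ) by push_cast; ring,
            hPev, hgS]
          rw [hgk'] at ihk'
          rw [hgk] at ihk
          rw [hgk2] at ihk2
          linear_combination ((1 - X^(8*(t+(k'+2)+1))) * X^(8*(t+(k'+2))+4)) * ihk'
            + ((1 - X^(8*(t+(k'+2)+1))) * X^(8*(t+(k'+2))+4)) * ihk2
            + ((1 - X^(8*(t+(k'+2)+1))) * (1 + X^(16*(t+(k'+2))+8))) * ihk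

lemma S_eq : ∀ n : ℕ, S n = (-1)^n * X^(2*n) * P1 n
  | 0 => by simp [S, P1, c_zero]
  | (n+1) => by
    rw [S_succ, S_eq n]
    unfold P1
    rw [Finset.prod_range_succ]
    ring

/-- `P` agrees with `1` in all coefficients below `B`. -/
def OneBelow (B : ℕ) (P : PowerSeries ℤ) : Prop :=
  ∀ t < B, PowerSeries.coeff (R := ℤ) t P = if t = 0 then 1 else 0

lemma oneBelow_one (B : ℕ) : OneBelow B 1 := by
  intro t _
  rw [PowerSeries.coeff_one]

lemma oneBelow_mul {B : ℕ} {P Q : PowerSeries ℤ} (hP : OneBelow B P) (hQ : OneBelow B Q) :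
    OneBelow B (P * Q) := by
  intro t ht
  rw [PowerSeries.coeff_mul]
  rcases Nat.eq_zero_or_pos t with rfl | htpos
  · simp [hP 0 ht, hQ 0 ht]
  · rw [if_neg (by omega)]
    apply Finset.sum_eq_zero
    rintro ⟨i, j⟩ hm
    rw [Finset.HasAntidiagonal.mem_antidiagonal] at hm
    rcases Nat.eq_zero_or_pos i with rfl | hipos
    · rw [hQ j (by omega), if_neg (by omega), mul_zero]
    · rw [hP i (by omega), if_neg (by omega), zero_mul]

lemma oneBelow_factor {B e : ℕ} (h : B ≤ e) : OneBelow B (1 - X^e) := by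
  intro t ht
  rw [map_sub, PowerSeries.coeff_one, PowerSeries.coeff_X_pow]
  have hne : t ≠ e := by omega
  simp [hne]

lemma oneBelow_prod {B : ℕ} (T : Finset ℕ) (e : ℕ → ℕ) (h : ∀ j ∈ T, B ≤ e j) :
    OneBelow B (∏ j ∈ T, (1 - X^(e j))) := by
  refine Finset.prod_induction _ (OneBelow B) (fun _ _ => oneBelow_mul) (oneBelow_one B) ?_
  exact fun j hj => oneBelow_factor (h j hj)

lemma coeff_mul_oneBelow {P Q : PowerSeries ℤ} {N : ℕ} (h : OneBelow (N+1) Q) :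
    PowerSeries.coeff (R := ℤ) N (P * Q) = PowerSeries.coeff (R := ℤ) N P := by
  rw [PowerSeries.coeff_mul, Finset.sum_eq_single (N, 0)]
  · rw [h 0 (by omega), if_pos rfl, mul_one]
  · rintro ⟨i, j⟩ hm hne
    rw [Finset.HasAntidiagonal.mem_antidiagonal] at hm
    have hj : j ≠ 0 := by
      rintro rfl
      exact hne (by simp at hm ⊢; omega)
    rw [h j (by omega), if_neg hj, mul_zero]
  · intro hni
    exact absurd (by simp [Finset.mem_antidiagonal]) hni

lemma oneBelow_g (n k : ℕ) (hk : k ≤ n) : OneBelow (8*(n-k)+8) (g n k) := by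
  unfold g
  apply oneBelow_mul <;>
    · apply oneBelow_prod
      intro j hj
      rw [Finset.mem_Ioc] at hj
      omega

lemma coeff_X_pow_mul_of_lt (φ : PowerSeries ℤ) {t E : ℕ} (h : t < E) :
    PowerSeries.coeff (R := ℤ) t (X^E * φ) = 0 := by
  rw [PowerSeries.coeff_mul]
  apply Finset.sum_eq_zero
  rintro ⟨i, j⟩ hm
  rw [Finset.HasAntidiagonal.mem_antidiagonal] at hm
  rw [PowerSeries.coeff_X_pow, if_neg (by omega), zero_mul]

lemma mod6_ne (k : ℕ) : (4*(k*k) + 2*k) % 6 ≠ 4 ∧ (4*(k*k) - 2*k) % 6 ≠ 4 := by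
  obtain ⟨a, j, hj, rfl⟩ : ∃ a j, j < 3 ∧ k = 3*a + j := ⟨k/3, k%3, by omega, by omega⟩
  have hb : (3*a+j) * (3*a+j) = 9*(a*a) + 6*(a*j) + j*j := by ring
  rw [hb]
  generalize a*a = b
  interval_cases j <;> omega

lemma coeff_term (n N' k : ℕ) (h6 : N' % 6 = 4) (hle : N' ≤ n) (hk : k ≤ n) (E : ℕ)
    (hE : E = 2*(n+k) + 4*(k*k) ∨ E = 2*(n-k) + 4*(k*k)) :
    PowerSeries.coeff (R := ℤ) (N'+2*n) (X^E * g n k) = 0 := by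
  have hkb : k ≤ k*k := by
    rcases Nat.eq_zero_or_pos k with rfl | h
    · omega
    · calc k = k*1 := by ring
        _ ≤ k*k := Nat.mul_le_mul_left k h
  have hmod := mod6_ne k
  rcases lt_or_ge (N'+2*n) E with hlt | hge
  · exact coeff_X_pow_mul_of_lt _ hlt
  · have hco := PowerSeries.coeff_X_pow_mul (g n k) E (N'+2*n-E)
    rw [show N'+2*n-E+E = N'+2*n from by omega] at hco
    rw [hco]
    have hob := oneBelow_g n k hk
    rw [hob (N'+2*n-E) (by rcases hE with rfl|rfl <;> omega),
      if_neg (by rcases hE with rfl|rfl <;> omega)]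

lemma keyL6 (n N' : ℕ) (h6 : N' % 6 = 4) (hle : N' ≤ n) :
    PowerSeries.coeff (R := ℤ) N' (P1 n * Pev n) = 0 := by
  have hsq : ((-1 : PowerSeries ℤ))^n * (-1)^n = 1 := by
    rw [← mul_pow]; norm_num
  have h1 : (X : PowerSeries ℤ)^(2*n) * P1 n = (-1)^n * S n := by
    rw [S_eq n, show ((-1:PowerSeries ℤ))^n * ((-1)^n * X^(2*n) * P1 n)
      = ((-1)^n*(-1)^n) * (X^(2*n) * P1 n) from by ring, hsq, one_mul]
  have hstart : (X : PowerSeries ℤ)^(2*n) * (P1 n * Pev n)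
      = ∑ d ∈ Finset.range (2*n+1), ((-1:ℤ)^(n+d)) • (X^(2*d) * (c n ((d:ℤ) - (n:ℤ)) * Pev n)) := by
    calc (X : PowerSeries ℤ)^(2*n) * (P1 n * Pev n) = (X^(2*n) * P1 n) * Pev n := by ring
      _ = ((-1)^n * S n) * Pev n := by rw [h1]
      _ = _ := by
          rw [S_def n, Finset.mul_sum, Finset.sum_mul]
          refine Finset.sum_congr rfl fun d _ => ?_
          rw [zsmul_eq_mul]
          push_cast
          ring
  have hco := congrArg (PowerSeries.coeff (R := ℤ) (N' + 2*n)) hstart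
  rw [PowerSeries.coeff_X_pow_mul, map_sum] at hco
  rw [hco]
  apply Finset.sum_eq_zero
  intro d hd
  rw [Finset.mem_range] at hd
  rw [map_smul]
  rcases le_or_gt n d with hnd | hnd
  · have hcast : (d:ℤ) - (n:ℤ) = ((d - n : ℕ) : ℤ) := by omega
    rw [hcast, gPev n (d-n) (by omega), ← mul_assoc, ← pow_add,
      coeff_term n N' (d-n) h6 hle (by omega) _
        (Or.inl (by rw [pow_two]; generalize (d-n)*(d-n) = b; omega)), smul_zero]
  · have hcast : (d:ℤ) - (n:ℤ) = -(((n - d : ℕ)) : ℤ) := by omega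
    rw [hcast, c_neg, gPev n (n-d) (by omega), ← mul_assoc, ← pow_add,
      coeff_term n N' (n-d) h6 hle (by omega) _
        (Or.inr (by rw [pow_two]; generalize (n-d)*(n-d) = b; omega)), smul_zero]

def cond8 (m : ℕ) : Prop := m % 8 = 0 ∨ m % 8 = 2 ∨ m % 8 = 6

instance : DecidablePred cond8 := fun m => by unfold cond8; infer_instance

lemma prod_filter_eq : ∀ t : ℕ,
    ∏ m ∈ (Finset.Icc 1 (8*t)).filter cond8, (1 - (X : PowerSeries ℤ)^m) = P1 t * Pev t := by
  intro t
  induction t with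
  | zero =>
    rw [show 8*0 = 0 from rfl, show Finset.Icc 1 0 = ∅ from rfl]
    simp [P1, Pev]
  | succ t iht =>
    have hset : (Finset.Icc 1 (8*(t+1))).filter cond8
        = ((Finset.Icc 1 (8*t)).filter cond8) ∪ {8*t+2, 8*t+6, 8*t+8} := by
      ext m
      simp only [Finset.mem_filter, Finset.mem_Icc, Finset.mem_union, Finset.mem_insert,
        Finset.mem_singleton, cond8]
      omega
    have hdisj : Disjoint ((Finset.Icc 1 (8*t)).filter cond8)
        ({8*t+2, 8*t+6, 8*t+8} : Finset ℕ) := by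
      rw [Finset.disjoint_left]
      intro m hm hm'
      simp only [Finset.mem_filter, Finset.mem_Icc] at hm
      simp only [Finset.mem_insert, Finset.mem_singleton] at hm'
      omega
    rw [hset, Finset.prod_union hdisj, iht,
      Finset.prod_insert (by simp), Finset.prod_insert (by simp),
      Finset.prod_singleton]
    unfold P1 Pev
    rw [Finset.prod_range_succ, Finset.prod_Ioc_succ_top (Nat.zero_le t) (fun j => 1 - X^(8*j))]
    ring

lemma coeff_F3 (M N' : ℕ) (h6 : N' % 6 = 4) (hle : N' ≤ M) :
    PowerSeries.coeff (R := ℤ) N' (∏ m ∈ (Finset.Icc 1 M).filter cond8, (1 - (X : PowerSeries ℤ)^m)) = 0 := by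
  have hsub : (Finset.Icc 1 (8*M)).filter cond8
      = ((Finset.Icc 1 M).filter cond8) ∪ ((Finset.Ioc M (8*M)).filter cond8) := by
    ext m
    simp only [Finset.mem_filter, Finset.mem_Icc, Finset.mem_union, Finset.mem_Ioc]
    constructor
    · rintro ⟨h1, h2⟩; rcases le_or_gt m M with h|h
      · exact Or.inl ⟨⟨h1.1, h⟩, h2⟩
      · exact Or.inr ⟨⟨h, h1.2⟩, h2⟩
    · rintro (⟨h1, h2⟩ | ⟨h1, h2⟩) <;> exact ⟨⟨by omega, by omega⟩, h2⟩
  have hdisj : Disjoint ((Finset.Icc 1 M).filter cond8) ((Finset.Ioc M (8*M)).filter cond8) := by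
    rw [Finset.disjoint_left]
    intro m hm hm'
    simp only [Finset.mem_filter, Finset.mem_Icc, Finset.mem_Ioc] at hm hm'
    omega
  have h3 : PowerSeries.coeff (R := ℤ) N'
      (∏ m ∈ (Finset.Icc 1 (8*M)).filter cond8, (1 - (X : PowerSeries ℤ)^m)) = 0 := by
    rw [prod_filter_eq M]
    exact keyL6 M N' h6 hle
  rw [hsub, Finset.prod_union hdisj, coeff_mul_oneBelow] at h3
  · exact h3
  · refine oneBelow_prod _ (fun m => m) ?_
    intro j hj
    simp only [Finset.mem_filter, Finset.mem_Ioc] at hj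
    show N' + 1 ≤ j
    omega

/-- the coefficients of `P` vanish away from multiples of 24. -/
def Supp24 (P : PowerSeries ℤ) : Prop := ∀ t : ℕ, ¬ (24 ∣ t) → PowerSeries.coeff (R := ℤ) t P = 0

lemma supp24_one : Supp24 1 := by
  intro t ht
  rw [PowerSeries.coeff_one, if_neg (by omega)]

lemma supp24_mul {P Q : PowerSeries ℤ} (hP : Supp24 P) (hQ : Supp24 Q) : Supp24 (P * Q) := by
  intro t ht
  rw [PowerSeries.coeff_mul]
  apply Finset.sum_eq_zero
  rintro ⟨i, j⟩ hm
  rw [Finset.HasAntidiagonal.mem_antidiagonal] at hm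
  by_cases hi : 24 ∣ i
  · rw [hQ j (by omega), mul_zero]
  · rw [hP i hi, zero_mul]

lemma supp24_factor {e : ℕ} (h : 24 ∣ e) : Supp24 (1 - X^e) := by
  intro t ht
  rw [map_sub, PowerSeries.coeff_one, PowerSeries.coeff_X_pow,
    if_neg (by omega), if_neg (by rintro rfl; exact ht h), sub_zero]

lemma supp24_prod (T : Finset ℕ) (e : ℕ → ℕ) (h : ∀ j ∈ T, 24 ∣ e j) :
    Supp24 (∏ j ∈ T, (1 - X^(e j))) := by
  refine Finset.prod_induction _ Supp24 (fun _ _ => supp24_mul) supp24_one ?_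
  exact fun j hj => supp24_factor (h j hj)

end CVaux
end

theorem coeff_vanishes (n : ℕ) :
    (PowerSeries.coeff (R := ℤ) (6 * n + 4))
        (∏ m ∈ Finset.Icc 1 (6 * n + 4),
          if m % 24 ∈ ({2, 6, 8, 10, 14, 16, 18, 22} : Finset ℕ) then
            (1 - PowerSeries.X ^ m : PowerSeries ℤ) else 1)
      = 0 := by
  classical
  rw [Finset.prod_ite, Finset.prod_const_one, mul_one]
  have key : ∀ m' : ℕ, m' ≤ n → PowerSeries.coeff (R := ℤ) (6*m'+4)
      (∏ m ∈ (Finset.Icc 1 (6*n+4)).filter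
          (fun m => m % 24 ∈ ({2,6,8,10,14,16,18,22} : Finset ℕ)),
        (1 - PowerSeries.X^m : PowerSeries ℤ)) = 0 := by
    intro m'
    induction m' using Nat.strong_induction_on with
    | _ m' IH =>
      intro hm'
      have hunion : (Finset.Icc 1 (6*n+4)).filter CVaux.cond8
          = ((Finset.Icc 1 (6*n+4)).filter
              (fun m => m % 24 ∈ ({2,6,8,10,14,16,18,22} : Finset ℕ)))
            ∪ ((Finset.Icc 1 (6*n+4)).filter (fun m => m % 24 = 0)) := by
        ext m
        simp only [Finset.mem_filter, Finset.mem_Icc, Finset.mem_union, Finset.mem_insert,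
          Finset.mem_singleton, CVaux.cond8]
        omega
      have hdisj : Disjoint ((Finset.Icc 1 (6*n+4)).filter
            (fun m => m % 24 ∈ ({2,6,8,10,14,16,18,22} : Finset ℕ)))
          ((Finset.Icc 1 (6*n+4)).filter (fun m => m % 24 = 0)) := by
        rw [Finset.disjoint_left]
        intro m hm hm'
        simp only [Finset.mem_filter, Finset.mem_Icc, Finset.mem_insert,
          Finset.mem_singleton] at hm hm'
        omega
      have hA := CVaux.coeff_F3 (6*n+4) (6*m'+4) (by omega : (6*m'+4) % 6 = 4) (by omega : 6*m'+4 ≤ 6*n+4)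
      rw [hunion, Finset.prod_union hdisj, PowerSeries.coeff_mul] at hA
      rw [Finset.sum_eq_single ((6*m'+4 : ℕ), (0:ℕ))] at hA
      · have h0 : PowerSeries.coeff (R := ℤ) 0 (∏ m ∈ (Finset.Icc 1 (6*n+4)).filter
            (fun m => m % 24 = 0), (1 - PowerSeries.X^m : PowerSeries ℤ)) = 1 := by
          have hob := CVaux.oneBelow_prod (B := 1)
            ((Finset.Icc 1 (6*n+4)).filter (fun m => m % 24 = 0)) (fun m => m) ?_ 0 (by omega)
          · simpa using hob
          · intro j hj
            simp only [Finset.mem_filter, Finset.mem_Icc] at hj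
            show 1 ≤ j
            omega
        rw [h0, mul_one] at hA
        exact hA
      · rintro ⟨i, j⟩ hm hne
        rw [Finset.HasAntidiagonal.mem_antidiagonal] at hm
        by_cases h24 : 24 ∣ j
        · have hj0 : j ≠ 0 := by
            rintro rfl
            apply hne
            have hi : i = 6*m'+4 := by omega
            rw [hi]
          obtain ⟨a, rfl⟩ := h24
          have ha : i = 6*(m' - 4*a)+4 := by omega
          have hlt : m' - 4*a < m' := by omega
          rw [ha, IH _ hlt (by omega), zero_mul]
        · rw [CVaux.supp24_prod _ (fun m => m) ?_ j h24, mul_zero]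
          intro m hmf
          simp only [Finset.mem_filter] at hmf
          show 24 ∣ m
          omega
      · intro hni
        exact absurd (by simp) hni
  exact key n le_rfl
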